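/- Let d ∈ ℕ, let M be a symmetric positive definite d×d real matrix, and let i ∈ {1,…,d+1}. For y ∈ ℝ^{i−1} define ψ(y) = ∫_{ℝ^{d−i+1}} exp(−(1/2)·(−y, x)ᵀ M (−y, x)) dx, where (−y, x) ∈ ℝ^d denotes the vector whose first i−1 coordinates are −y¹,…,−y^{i−1} and whose remaining d−i+1 coordinates are those of x (for i = d+1 the integral is absent and ψ(y) = exp(−(1/2)yᵀMy)). Then there exist constants C, c > 0 such that for all y, w ∈ ℝ^{i−1}: |ψ(y) − ψ(w)| ≤ C·e^{−c·min(|y|², |w|²)}·(|y−w| + |y−w|²). -/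

import Mathlib

open Matrix MeasureTheory

lemma abs_exp_sub_exp (a b : ℝ) :
    |Real.exp a - Real.exp b| ≤ |a - b| * (Real.exp a + Real.exp b) := by
  have key : ∀ p q : ℝ, q ≤ p →
      Real.exp p - Real.exp q ≤ (p - q) * (Real.exp p + Real.exp q) := by
    intro p q hqp
    have h1 : Real.exp (q - p) * Real.exp p = Real.exp q := by
      rw [← Real.exp_add]; ring_nf
    have h2 := Real.add_one_le_exp (q - p)
    nlinarith [Real.exp_pos p, Real.exp_pos q,
      mul_le_mul_of_nonneg_right h2 (Real.exp_pos p).le]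
  rcases le_total b a with h | h
  · rw [abs_of_nonneg (sub_nonneg.2 (Real.exp_le_exp.2 h)), abs_of_nonneg (sub_nonneg.2 h)]
    exact key a b h
  · rw [abs_sub_comm, abs_sub_comm a b,
      abs_of_nonneg (sub_nonneg.2 (Real.exp_le_exp.2 h)), abs_of_nonneg (sub_nonneg.2 h)]
    have := key b a h
    nlinarith [this]

lemma le_sqrt_mul_exp {α : ℝ} (hα : 0 < α) {t : ℝ} (ht : 0 ≤ t) :
    t ≤ Real.sqrt (1 / (2 * α)) * Real.exp (α * t ^ 2) := by
  set s := Real.sqrt (2 * α) with hsdef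
  have hs2 : s ^ 2 = 2 * α := Real.sq_sqrt (by positivity)
  have hs0 : 0 < s := Real.sqrt_pos.2 (by positivity)
  have h1 : s * t ≤ 1 + α * t ^ 2 := by nlinarith [sq_nonneg (s * t - 1)]
  have h2 : 1 + α * t ^ 2 ≤ Real.exp (α * t ^ 2) := by
    linarith [Real.add_one_le_exp (α * t ^ 2)]
  have hsq : Real.sqrt (1 / (2 * α)) = 1 / s := by
    rw [one_div, one_div, ← Real.sqrt_inv]
  rw [hsq, div_mul_eq_mul_div, le_div_iff₀ hs0]
  nlinarith [h1, h2]

lemma sqrt_add_le' {a b : ℝ} (ha : 0 ≤ a) (hb : 0 ≤ b) :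
    Real.sqrt (a + b) ≤ Real.sqrt a + Real.sqrt b := by
  have h : a + b ≤ (Real.sqrt a + Real.sqrt b) ^ 2 := by
    nlinarith [Real.sq_sqrt ha, Real.sq_sqrt hb,
      mul_nonneg (Real.sqrt_nonneg a) (Real.sqrt_nonneg b)]
  calc Real.sqrt (a + b) ≤ Real.sqrt ((Real.sqrt a + Real.sqrt b) ^ 2) := Real.sqrt_le_sqrt h
    _ = Real.sqrt a + Real.sqrt b := Real.sqrt_sq (by positivity)

lemma sqrt_sum_sq_triangle {m : ℕ} (y w : Fin m → ℝ) :
    Real.sqrt (∑ i, w i ^ 2) ≤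
      Real.sqrt (∑ i, y i ^ 2) + Real.sqrt (∑ i, (y i - w i) ^ 2) := by
  set ny := Real.sqrt (∑ i, y i ^ 2) with hny
  set d := Real.sqrt (∑ i, (y i - w i) ^ 2) with hd
  have hny2 : ny ^ 2 = ∑ i, y i ^ 2 := Real.sq_sqrt (by positivity)
  have hd2 : d ^ 2 = ∑ i, (y i - w i) ^ 2 := Real.sq_sqrt (by positivity)
  have hcs : (∑ i, y i * (y i - w i)) ^ 2 ≤ (∑ i, y i ^ 2) * ∑ i, (y i - w i) ^ 2 :=
    Finset.sum_mul_sq_le_sq_mul_sq _ _ _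
  have hexp : ∑ i, w i ^ 2 =
      (∑ i, y i ^ 2) - 2 * (∑ i, y i * (y i - w i)) + ∑ i, (y i - w i) ^ 2 := by
    rw [Finset.mul_sum, ← Finset.sum_sub_distrib, ← Finset.sum_add_distrib]
    exact Finset.sum_congr rfl fun i _ => by ring
  have hle : ∑ i, w i ^ 2 ≤ (ny + d) ^ 2 := by
    have hmn : 0 ≤ ny * d := mul_nonneg (Real.sqrt_nonneg _) (Real.sqrt_nonneg _)
    nlinarith [hcs, hny2, hd2, hexp, hmn,
      sq_nonneg ((∑ i, y i * (y i - w i)) + ny * d)]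
  calc Real.sqrt (∑ i, w i ^ 2) ≤ Real.sqrt ((ny + d) ^ 2) := Real.sqrt_le_sqrt hle
    _ = ny + d := Real.sqrt_sq (by positivity)

lemma abs_le_sqrt_sum {n : ℕ} (v : Fin n → ℝ) (i : Fin n) :
    |v i| ≤ Real.sqrt (∑ j, v j ^ 2) := by
  have h : v i ^ 2 ≤ ∑ j, v j ^ 2 :=
    Finset.single_le_sum (f := fun j => v j ^ 2) (fun j _ => sq_nonneg _) (Finset.mem_univ i)
  calc |v i| = Real.sqrt (v i ^ 2) := (Real.sqrt_sq_eq_abs _).symm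
    _ ≤ _ := Real.sqrt_le_sqrt h

lemma dot_mulVec_bound {n : ℕ} (M : Matrix (Fin n) (Fin n) ℝ) (u v : Fin n → ℝ) :
    |u ⬝ᵥ M.mulVec v| ≤ (∑ i, ∑ j, |M i j|) *
      Real.sqrt (∑ i, u i ^ 2) * Real.sqrt (∑ j, v j ^ 2) := by
  set nu := Real.sqrt (∑ i, u i ^ 2) with hnu
  set nv := Real.sqrt (∑ j, v j ^ 2) with hnv
  have hnu0 : 0 ≤ nu := Real.sqrt_nonneg _
  have hnv0 : 0 ≤ nv := Real.sqrt_nonneg _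
  have h : u ⬝ᵥ M.mulVec v = ∑ i, ∑ j, u i * (M i j * v j) := by
    simp [dotProduct, Matrix.mulVec, Finset.mul_sum]
  rw [h]
  calc |∑ i, ∑ j, u i * (M i j * v j)| ≤ ∑ i, |∑ j, u i * (M i j * v j)| :=
        Finset.abs_sum_le_sum_abs _ _
    _ ≤ ∑ i, ∑ j, |u i * (M i j * v j)| :=
        Finset.sum_le_sum fun i _ => Finset.abs_sum_le_sum_abs _ _
    _ ≤ ∑ i, ∑ j, |M i j| * (nu * nv) := by
        refine Finset.sum_le_sum fun i _ => Finset.sum_le_sum fun j _ => ?_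
        rw [abs_mul, abs_mul]
        have h1 := abs_le_sqrt_sum u i
        have h2 := abs_le_sqrt_sum v j
        calc |u i| * (|M i j| * |v j|) = |M i j| * (|u i| * |v j|) := by ring
          _ ≤ |M i j| * (nu * nv) := by
              refine mul_le_mul_of_nonneg_left ?_ (abs_nonneg _)
              exact mul_le_mul h1 h2 (abs_nonneg _) hnu0
    _ = (∑ i, ∑ j, |M i j|) * nu * nv := by
        simp [Finset.sum_mul, mul_assoc]

lemma sum_append_sq {m k : ℕ} (a : Fin m → ℝ) (b : Fin k → ℝ) :
    ∑ i : Fin (m + k), (Fin.append a b i) ^ 2 = (∑ j, a j ^ 2) + ∑ j, b j ^ 2 := by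
  rw [Fin.sum_univ_add]
  simp [Fin.append_left, Fin.append_right]

lemma continuous_append {m k : ℕ} (a : Fin m → ℝ) :
    Continuous (fun x : Fin k → ℝ => (Fin.append a x : Fin (m + k) → ℝ)) := by
  apply continuous_pi
  intro i
  refine Fin.addCases (motive := fun i => Continuous fun x : Fin k → ℝ => Fin.append a x i)
    (fun j => ?_) (fun j => ?_) i
  · simp only [Fin.append_left]; exact continuous_const
  · simp only [Fin.append_right]; exact continuous_apply j

lemma continuous_quad {n : ℕ} (M : Matrix (Fin n) (Fin n) ℝ) :
    Continuous (fun v : Fin n → ℝ => v ⬝ᵥ M.mulVec v) := by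
  have h : (fun v : Fin n → ℝ => v ⬝ᵥ M.mulVec v)
      = fun v => ∑ i, ∑ j, v i * (M i j * v j) := by
    funext v
    simp [dotProduct, Matrix.mulVec, Finset.mul_sum]
  rw [h]
  refine continuous_finset_sum _ fun i _ => continuous_finset_sum _ fun j _ => ?_
  exact (continuous_apply i).mul (continuous_const.mul (continuous_apply j))

lemma gauss_integrable (k : ℕ) {c : ℝ} (hc : 0 < c) :
    Integrable (fun x : Fin k → ℝ => Real.exp (-c * ∑ i, x i ^ 2)) := by
  have h : (fun x : Fin k → ℝ => Real.exp (-c * ∑ i, x i ^ 2))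
      = fun x => ∏ i, Real.exp (-c * x i ^ 2) := by
    funext x
    rw [← Real.exp_sum, Finset.mul_sum]
  rw [h]
  exact Integrable.fintype_prod (𝕜 := ℝ)
    (f := fun (_ : Fin k) (t : ℝ) => Real.exp (-c * t ^ 2))
    (fun i => by simpa [sq] using integrable_exp_neg_mul_sq hc)

lemma posdef_lower {n : ℕ} (hn : 0 < n) (M : Matrix (Fin n) (Fin n) ℝ) (hM : M.PosDef) :
    ∃ lam > 0, ∀ v : Fin n → ℝ, lam * ∑ i, v i ^ 2 ≤ v ⬝ᵥ M.mulVec v := by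
  classical
  set E := EuclideanSpace ℝ (Fin n)
  let f : E → ℝ := fun v => (WithLp.equiv 2 (Fin n → ℝ) v) ⬝ᵥ M.mulVec (WithLp.equiv 2 (Fin n → ℝ) v)
  have hfc : Continuous f :=
    (continuous_quad M).comp (PiLp.continuous_ofLp 2 (fun _ : Fin n => ℝ))
  have hne : (Metric.sphere (0 : E) 1).Nonempty := by
    refine ⟨EuclideanSpace.single ⟨0, hn⟩ (1 : ℝ), ?_⟩
    have h1 : ‖EuclideanSpace.single (⟨0, hn⟩ : Fin n) (1 : ℝ)‖ = ‖(1 : ℝ)‖ :=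
      EuclideanSpace.norm_single _ _
    rw [mem_sphere_zero_iff_norm, h1, norm_one]
  obtain ⟨v₀, hv₀S, hmin'⟩ :=
    (isCompact_sphere (0 : E) 1).exists_isMinOn hne hfc.continuousOn
  have hmin : ∀ x ∈ Metric.sphere (0 : E) 1, f v₀ ≤ f x := fun x hx =>
    isMinOn_iff.1 hmin' x hx
  have hv₀norm : ‖v₀‖ = 1 := by simpa using mem_sphere_zero_iff_norm.1 hv₀S
  have hv₀ne : (WithLp.equiv 2 (Fin n → ℝ) v₀) ≠ 0 := by
    intro h
    have : v₀ = 0 := by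
      apply (WithLp.equiv 2 (Fin n → ℝ)).injective
      simpa using h
    rw [this] at hv₀norm; simp at hv₀norm
  have hlam : 0 < f v₀ := by
    have := hM.dotProduct_mulVec_pos hv₀ne
    simpa [f, star_trivial] using this
  refine ⟨f v₀, hlam, fun v => ?_⟩
  by_cases hv : v = 0
  · simp [hv, dotProduct, Matrix.mulVec]
  · have hsum : 0 < ∑ i, v i ^ 2 := by
      obtain ⟨i, hi⟩ := Function.ne_iff.1 hv
      exact Finset.sum_pos' (fun j _ => sq_nonneg _)
        ⟨i, Finset.mem_univ i, by have hvi : v i ≠ 0 := by simpa using hi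
                                  positivity⟩
    set t := Real.sqrt (∑ i, v i ^ 2) with htdef
    have ht : 0 < t := Real.sqrt_pos.2 hsum
    have ht2 : t ^ 2 = ∑ i, v i ^ 2 := Real.sq_sqrt hsum.le
    set u : Fin n → ℝ := fun i => t⁻¹ * v i with hudef
    have hu2 : ∑ i, u i ^ 2 = 1 := by
      simp only [hudef, mul_pow, ← Finset.mul_sum]
      rw [← ht2]
      field_simp
    have huS : (WithLp.equiv 2 (Fin n → ℝ)).symm u ∈ Metric.sphere (0 : E) 1 := by
      rw [mem_sphere_zero_iff_norm, EuclideanSpace.norm_eq]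
      have : ∀ i, ‖((WithLp.equiv 2 (Fin n → ℝ)).symm u) i‖ ^ 2 = u i ^ 2 := fun i => by
        rw [WithLp.equiv_symm_apply, WithLp.ofLp_toLp]; exact sq_abs _
      simp only [this, hu2, Real.sqrt_one]
    have hfu : f v₀ ≤ u ⬝ᵥ M.mulVec u := by
      have := hmin _ huS
      simpa [f] using this
    have hv_eq : v = t • u := by
      funext i
      simp [hudef, ← mul_assoc, mul_inv_cancel₀ ht.ne']
    have hQ : v ⬝ᵥ M.mulVec v = t ^ 2 * (u ⬝ᵥ M.mulVec u) := by
      rw [hv_eq, Matrix.mulVec_smul, smul_dotProduct, dotProduct_smul]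
      simp [smul_eq_mul, sq]; ring
    rw [hQ, ← ht2]
    have h2 : 0 < t ^ 2 := by positivity
    nlinarith [hfu, h2]

/-- The coefficient function `ψ(y)`: the integral over `x ∈ ℝ^k` of the Gaussian
kernel `exp(-(1/2) zᵀ M z)` evaluated at the concatenated vector `z = (-y, x) ∈ ℝ^{m+k}`
(for `k = 0`, this is just `exp(-(1/2) yᵀ M y)`). -/
noncomputable def psiFun {m k : ℕ} (M : Matrix (Fin (m + k)) (Fin (m + k)) ℝ)
    (y : Fin m → ℝ) : ℝ :=
  ∫ x : Fin k → ℝ,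
    Real.exp (-(1 / 2) * (Fin.append (fun j => -(y j)) x ⬝ᵥ
      M.mulVec (Fin.append (fun j => -(y j)) x)))

set_option maxHeartbeats 2000000 in
/-- Lipschitz-type estimate (display (3.16) of the paper) for the coefficient
function `ψ` built from a symmetric positive definite matrix `M` on `ℝ^d`,
`d = m + k`, with `m = i - 1` and `k = d - i + 1`. -/
theorem psi_difference_estimate (m k : ℕ)
    (M : Matrix (Fin (m + k)) (Fin (m + k)) ℝ) (hsymm : M.IsSymm) (hM : M.PosDef) :
    ∃ C > 0, ∃ c > 0, ∀ y w : Fin m → ℝ,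
      |psiFun M y - psiFun M w| ≤
        C * Real.exp (-c * min (∑ i, y i ^ 2) (∑ i, w i ^ 2)) *
          (Real.sqrt (∑ i, (y i - w i) ^ 2) + ∑ i, (y i - w i) ^ 2) := by
  by_cases hm0 : m = 0
  · subst hm0
    refine ⟨1, one_pos, 1, one_pos, fun y w => ?_⟩
    have hyw : y = w := Subsingleton.elim y w
    subst hyw
    simp
  · have hn : 0 < m + k := by omega
    obtain ⟨lam, hlam, hQlow⟩ := posdef_lower hn M hM
    set K := ∑ i, ∑ j, |M i j| with hKdef
    have hK0 : 0 ≤ K := Finset.sum_nonneg fun i _ => Finset.sum_nonneg fun j _ => abs_nonneg _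
    set C₁ := Real.sqrt (1 / (2 * (lam / 4))) with hC1def
    have hC10 : 0 ≤ C₁ := Real.sqrt_nonneg _
    set I₀ := ∫ x : Fin k → ℝ, Real.exp (-(lam / 4) * ∑ i, x i ^ 2) with hI0def
    have hI00 : 0 ≤ I₀ := integral_nonneg fun x => (Real.exp_pos _).le
    have h4 : 0 < lam / 4 := by linarith
    have h2 : 0 < lam / 2 := by linarith
    refine ⟨(K + 1) * (4 * C₁ + 1) * (I₀ + 1), by
      apply mul_pos (mul_pos _ _) _ <;> linarith, lam / 4, h4, fun y w => ?_⟩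
    set Sy := ∑ i, y i ^ 2 with hSydef
    set Sw := ∑ i, w i ^ 2 with hSwdef
    set D := ∑ i, (y i - w i) ^ 2 with hDdef
    have hSy0 : 0 ≤ Sy := Finset.sum_nonneg fun i _ => sq_nonneg _
    have hSw0 : 0 ≤ Sw := Finset.sum_nonneg fun i _ => sq_nonneg _
    have hD0 : 0 ≤ D := Finset.sum_nonneg fun i _ => sq_nonneg _
    set ny := Real.sqrt Sy with hnydef
    set nw := Real.sqrt Sw with hnwdef
    set dl := Real.sqrt D with hdldef
    have hny0 : 0 ≤ ny := Real.sqrt_nonneg _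
    have hnw0 : 0 ≤ nw := Real.sqrt_nonneg _
    have hdl0 : 0 ≤ dl := Real.sqrt_nonneg _
    have hdl2 : dl ^ 2 = D := Real.sq_sqrt hD0
    have hny2 : ny ^ 2 = Sy := Real.sq_sqrt hSy0
    have hnw2 : nw ^ 2 = Sw := Real.sq_sqrt hSw0
    have htri1 : nw ≤ ny + dl := sqrt_sum_sq_triangle y w
    have htri2 : ny ≤ nw + dl := by
      have h := sqrt_sum_sq_triangle w y
      have hsy : ∑ i, (w i - y i) ^ 2 = D := by
        rw [hDdef]; exact Finset.sum_congr rfl fun i _ => by ring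
      rwa [hsy] at h
    set Em := Real.exp (-(lam / 4) * min Sy Sw) with hEmdef
    have hEm0 : 0 ≤ Em := (Real.exp_pos _).le
    set Ey := Real.exp (-(lam / 2) * Sy) with hEydef
    set Ew := Real.exp (-(lam / 2) * Sw) with hEwdef
    set Ey' := Real.exp (-(lam / 4) * Sy) with hEy'def
    set Ew' := Real.exp (-(lam / 4) * Sw) with hEw'def
    have hEy0 : 0 ≤ Ey := (Real.exp_pos _).le
    have hEw0 : 0 ≤ Ew := (Real.exp_pos _).le
    have hEy'0 : 0 ≤ Ey' := (Real.exp_pos _).le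
    have hEw'0 : 0 ≤ Ew' := (Real.exp_pos _).le
    have hEyEy' : Ey ≤ Ey' := Real.exp_le_exp.2 (by
      have h := mul_nonneg hlam.le hSy0; linarith only [h])
    have hEwEw' : Ew ≤ Ew' := Real.exp_le_exp.2 (by
      have h := mul_nonneg hlam.le hSw0; linarith only [h])
    have hEy'Em : Ey' ≤ Em := Real.exp_le_exp.2 (by
      have h := mul_le_mul_of_nonneg_left (min_le_left Sy Sw) h4.le
      linarith only [h])
    have hEw'Em : Ew' ≤ Em := Real.exp_le_exp.2 (by
      have h := mul_le_mul_of_nonneg_left (min_le_right Sy Sw) h4.le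
      linarith only [h])
    have hEyEm : Ey ≤ Em := hEyEy'.trans hEy'Em
    have hEwEm : Ew ≤ Em := hEwEw'.trans hEw'Em
    -- the two integrands
    set f : (Fin k → ℝ) → ℝ := fun x =>
      Real.exp (-(1 / 2) * (Fin.append (fun j => -(y j)) x ⬝ᵥ
        M.mulVec (Fin.append (fun j => -(y j)) x))) with hfdef
    set g : (Fin k → ℝ) → ℝ := fun x =>
      Real.exp (-(1 / 2) * (Fin.append (fun j => -(w j)) x ⬝ᵥ
        M.mulVec (Fin.append (fun j => -(w j)) x))) with hgdef
    have hfc : Continuous f :=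
      Real.continuous_exp.comp (continuous_const.mul
        ((continuous_quad M).comp (continuous_append _)))
    have hgc : Continuous g :=
      Real.continuous_exp.comp (continuous_const.mul
        ((continuous_quad M).comp (continuous_append _)))
    have hnegy : ∀ x : Fin k → ℝ,
        ∑ i, (Fin.append (fun j => -(y j)) x i) ^ 2 = Sy + ∑ i, x i ^ 2 := by
      intro x
      rw [sum_append_sq, hSydef]
      congr 1
      exact Finset.sum_congr rfl fun j _ => neg_sq _
    have hnegw : ∀ x : Fin k → ℝ,
        ∑ i, (Fin.append (fun j => -(w j)) x i) ^ 2 = Sw + ∑ i, x i ^ 2 := by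
      intro x
      rw [sum_append_sq, hSwdef]
      congr 1
      exact Finset.sum_congr rfl fun j _ => neg_sq _
    have hfb : ∀ x : Fin k → ℝ, f x ≤ Ey * Real.exp (-(lam / 2) * ∑ i, x i ^ 2) := by
      intro x
      have hq := hQlow (Fin.append (fun j => -(y j)) x)
      rw [hnegy x] at hq
      calc f x ≤ Real.exp (-(lam / 2) * Sy + -(lam / 2) * ∑ i, x i ^ 2) := by
            rw [hfdef]
            apply Real.exp_le_exp.2
            linarith only [hq]
        _ = Ey * Real.exp (-(lam / 2) * ∑ i, x i ^ 2) := Real.exp_add _ _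
    have hgb : ∀ x : Fin k → ℝ, g x ≤ Ew * Real.exp (-(lam / 2) * ∑ i, x i ^ 2) := by
      intro x
      have hq := hQlow (Fin.append (fun j => -(w j)) x)
      rw [hnegw x] at hq
      calc g x ≤ Real.exp (-(lam / 2) * Sw + -(lam / 2) * ∑ i, x i ^ 2) := by
            rw [hgdef]
            apply Real.exp_le_exp.2
            linarith only [hq]
        _ = Ew * Real.exp (-(lam / 2) * ∑ i, x i ^ 2) := Real.exp_add _ _
    have hf_int : Integrable f := by
      refine Integrable.mono' ((gauss_integrable k h2).const_mul Ey)
        hfc.aestronglyMeasurable (ae_of_all _ fun x => ?_)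
      rw [Real.norm_eq_abs, abs_of_pos (Real.exp_pos _)]
      exact hfb x
    have hg_int : Integrable g := by
      refine Integrable.mono' ((gauss_integrable k h2).const_mul Ew)
        hgc.aestronglyMeasurable (ae_of_all _ fun x => ?_)
      rw [Real.norm_eq_abs, abs_of_pos (Real.exp_pos _)]
      exact hgb x
    set B := K * dl * (4 * C₁ + dl) * Em with hBdef
    -- key pointwise bound
    have hpt : ∀ x : Fin k → ℝ,
        |f x - g x| ≤ B * Real.exp (-(lam / 4) * ∑ i, x i ^ 2) := by
      intro x
      set Sx := ∑ i, x i ^ 2 with hSxdef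
      have hSx0 : 0 ≤ Sx := Finset.sum_nonneg fun i _ => sq_nonneg _
      set nx := Real.sqrt Sx with hnxdef
      have hnx0 : 0 ≤ nx := Real.sqrt_nonneg _
      have hnx2 : nx ^ 2 = Sx := Real.sq_sqrt hSx0
      set Ex := Real.exp (-(lam / 2) * Sx) with hExdef
      set Ex' := Real.exp (-(lam / 4) * Sx) with hEx'def
      have hEx0 : 0 ≤ Ex := (Real.exp_pos _).le
      have hEx'0 : 0 ≤ Ex' := (Real.exp_pos _).le
      have hExEx' : Ex ≤ Ex' := Real.exp_le_exp.2 (by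
        have h := mul_nonneg hlam.le hSx0; linarith only [h])
      set z1 : Fin (m + k) → ℝ := Fin.append (fun j => -(y j)) x with hz1def
      set z2 : Fin (m + k) → ℝ := Fin.append (fun j => -(w j)) x with hz2def
      set Q1 := z1 ⬝ᵥ M.mulVec z1 with hQ1def
      set Q2 := z2 ⬝ᵥ M.mulVec z2 with hQ2def
      have hd : z1 - z2 = Fin.append (fun j => w j - y j) (fun _ => (0 : ℝ)) := by
        funext i
        simp only [Pi.sub_apply]
        refine Fin.addCases (motive := fun i =>
          z1 i - z2 i = Fin.append (fun j => w j - y j) (fun _ => (0 : ℝ)) i)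
          (fun j => ?_) (fun j => ?_) i
        · rw [hz1def, hz2def]
          simp only [Fin.append_left]
          ring
        · rw [hz1def, hz2def]
          simp only [Fin.append_right]
          ring
      have hdsum : ∑ i, ((z1 - z2) i) ^ 2 = D := by
        rw [hd, sum_append_sq, hDdef]
        have h0 : ∑ j : Fin k, ((fun _ => (0 : ℝ)) j) ^ 2 = 0 := by simp
        rw [h0, add_zero]
        exact Finset.sum_congr rfl fun j _ => by ring
      have hz1sum : ∑ i, z1 i ^ 2 = Sy + Sx := hnegy x
      have hz2sum : ∑ i, z2 i ^ 2 = Sw + Sx := hnegw x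
      have hid : Q1 - Q2 = (z1 - z2) ⬝ᵥ M.mulVec z1 + z2 ⬝ᵥ M.mulVec (z1 - z2) := by
        rw [hQ1def, hQ2def, sub_dotProduct, Matrix.mulVec_sub, dotProduct_sub]
        ring
      have hsq1 : Real.sqrt (Sy + Sx) ≤ ny + nx := by
        have h := sqrt_add_le' hSy0 hSx0
        rwa [← hnydef, ← hnxdef] at h
      have hsq2 : Real.sqrt (Sw + Sx) ≤ nw + nx := by
        have h := sqrt_add_le' hSw0 hSx0
        rwa [← hnwdef, ← hnxdef] at h
      have h1 : |(z1 - z2) ⬝ᵥ M.mulVec z1| ≤ K * dl * (ny + nx) := by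
        have h := dot_mulVec_bound M (z1 - z2) z1
        rw [hdsum, hz1sum, ← hdldef] at h
        calc |(z1 - z2) ⬝ᵥ M.mulVec z1| ≤ K * dl * Real.sqrt (Sy + Sx) := h
          _ ≤ K * dl * (ny + nx) :=
            mul_le_mul_of_nonneg_left hsq1 (mul_nonneg hK0 hdl0)
      have h1' : |z2 ⬝ᵥ M.mulVec (z1 - z2)| ≤ K * (nw + nx) * dl := by
        have h := dot_mulVec_bound M z2 (z1 - z2)
        rw [hdsum, hz2sum, ← hdldef] at h
        calc |z2 ⬝ᵥ M.mulVec (z1 - z2)| ≤ K * Real.sqrt (Sw + Sx) * dl := h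
          _ ≤ K * (nw + nx) * dl := by
            apply mul_le_mul_of_nonneg_right _ hdl0
            exact mul_le_mul_of_nonneg_left hsq2 hK0
      have habd : |(-(1 / 2) * Q1) - (-(1 / 2) * Q2)| ≤
          K / 2 * dl * ((ny + nx) + (nw + nx)) := by
        have e1 : (-(1 / 2) * Q1) - (-(1 / 2) * Q2) = -(1 / 2) * (Q1 - Q2) := by ring
        rw [e1, abs_mul, hid]
        have e2 : |(-(1 / 2) : ℝ)| = 1 / 2 := by rw [abs_neg, abs_of_pos]; norm_num
        rw [e2]
        have h3 := (abs_add_le ((z1 - z2) ⬝ᵥ M.mulVec z1) (z2 ⬝ᵥ M.mulVec (z1 - z2)))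
        linarith only [h1, h1', h3]
      have hexp := abs_exp_sub_exp (-(1 / 2) * Q1) (-(1 / 2) * Q2)
      have hfx : f x = Real.exp (-(1 / 2) * Q1) := by rw [hfdef]
      have hgx : g x = Real.exp (-(1 / 2) * Q2) := by rw [hgdef]
      -- the p-estimates
      have p1 : ny * Ey ≤ C₁ * Ey' := by
        have h := le_sqrt_mul_exp (α := lam / 4) h4 hny0
        rw [hny2, ← hC1def] at h
        have h' := mul_le_mul_of_nonneg_right h hEy0
        calc ny * Ey ≤ C₁ * Real.exp (lam / 4 * Sy) * Ey := h'
          _ = C₁ * Ey' := by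
            rw [hEy'def, mul_assoc, hEydef, ← Real.exp_add]
            congr 2
            ring
      have p2 : nx * Ex ≤ C₁ * Ex' := by
        have h := le_sqrt_mul_exp (α := lam / 4) h4 hnx0
        rw [hnx2, ← hC1def] at h
        have h' := mul_le_mul_of_nonneg_right h hEx0
        calc nx * Ex ≤ C₁ * Real.exp (lam / 4 * Sx) * Ex := h'
          _ = C₁ * Ex' := by
            rw [hEx'def, mul_assoc, hExdef, ← Real.exp_add]
            congr 2
            ring
      have p3 : nw * Ew ≤ C₁ * Ew' := by
        have h := le_sqrt_mul_exp (α := lam / 4) h4 hnw0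
        rw [hnw2, ← hC1def] at h
        have h' := mul_le_mul_of_nonneg_right h hEw0
        calc nw * Ew ≤ C₁ * Real.exp (lam / 4 * Sw) * Ew := h'
          _ = C₁ * Ew' := by
            rw [hEw'def, mul_assoc, hEwdef, ← Real.exp_add]
            congr 2
            ring
      -- claim A
      have claimA : (ny + nw + 2 * nx) * (Ey * Ex) ≤ (4 * C₁ + dl) * (Em * Ex') := by
        have A1 : (ny * Ey) * Ex ≤ (C₁ * Ey') * Ex := mul_le_mul_of_nonneg_right p1 hEx0
        have A2 : Ey' * Ex ≤ Em * Ex' := mul_le_mul hEy'Em hExEx' hEx0 hEm0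
        have A2' : C₁ * (Ey' * Ex) ≤ C₁ * (Em * Ex') := mul_le_mul_of_nonneg_left A2 hC10
        have A3 : Ey * Ex ≤ Em * Ex' := mul_le_mul hEyEm hExEx' hEx0 hEm0
        have A3' : dl * (Ey * Ex) ≤ dl * (Em * Ex') := mul_le_mul_of_nonneg_left A3 hdl0
        have A4 : (nx * Ex) * Ey ≤ (C₁ * Ex') * Ey := mul_le_mul_of_nonneg_right p2 hEy0
        have A5 : Ex' * Ey ≤ Ex' * Em :=
          mul_le_mul_of_nonneg_left hEyEm hEx'0
        have A5' : C₁ * (Ex' * Ey) ≤ C₁ * (Ex' * Em) := mul_le_mul_of_nonneg_left A5 hC10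
        have A6 : nw * (Ey * Ex) ≤ (ny + dl) * (Ey * Ex) :=
          mul_le_mul_of_nonneg_right htri1 (mul_nonneg hEy0 hEx0)
        linarith only [A1, A2', A3', A4, A5', A6]
      have claimB : (ny + nw + 2 * nx) * (Ew * Ex) ≤ (4 * C₁ + dl) * (Em * Ex') := by
        have A1 : (nw * Ew) * Ex ≤ (C₁ * Ew') * Ex := mul_le_mul_of_nonneg_right p3 hEx0
        have A2 : Ew' * Ex ≤ Em * Ex' := mul_le_mul hEw'Em hExEx' hEx0 hEm0
        have A2' : C₁ * (Ew' * Ex) ≤ C₁ * (Em * Ex') := mul_le_mul_of_nonneg_left A2 hC10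
        have A3 : Ew * Ex ≤ Em * Ex' := mul_le_mul hEwEm hExEx' hEx0 hEm0
        have A3' : dl * (Ew * Ex) ≤ dl * (Em * Ex') := mul_le_mul_of_nonneg_left A3 hdl0
        have A4 : (nx * Ex) * Ew ≤ (C₁ * Ex') * Ew := mul_le_mul_of_nonneg_right p2 hEw0
        have A5 : Ex' * Ew ≤ Ex' * Em :=
          mul_le_mul_of_nonneg_left hEwEm hEx'0
        have A5' : C₁ * (Ex' * Ew) ≤ C₁ * (Ex' * Em) := mul_le_mul_of_nonneg_left A5 hC10
        have A6 : ny * (Ew * Ex) ≤ (nw + dl) * (Ew * Ex) :=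
          mul_le_mul_of_nonneg_right htri2 (mul_nonneg hEw0 hEx0)
        linarith only [A1, A2', A3', A4, A5', A6]
      -- combine
      have hsum0 : 0 ≤ K / 2 * dl * ((ny + nx) + (nw + nx)) := by positivity
      have hfg : f x + g x ≤ Ey * Ex + Ew * Ex := by
        have hf1 := hfb x
        have hg1 := hgb x
        rw [← hSxdef, ← hExdef] at hf1 hg1
        linarith only [hf1, hg1]
      have step1 : |f x - g x| ≤
          (K / 2 * dl * ((ny + nx) + (nw + nx))) * (Ey * Ex + Ew * Ex) := by
        rw [hfx, hgx]
        calc |Real.exp (-(1 / 2) * Q1) - Real.exp (-(1 / 2) * Q2)|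
            ≤ |(-(1 / 2) * Q1) - (-(1 / 2) * Q2)| *
              (Real.exp (-(1 / 2) * Q1) + Real.exp (-(1 / 2) * Q2)) := hexp
          _ ≤ (K / 2 * dl * ((ny + nx) + (nw + nx))) * (Ey * Ex + Ew * Ex) := by
              apply mul_le_mul habd _ (by positivity) hsum0
              rw [← hfx, ← hgx]
              exact hfg
      calc |f x - g x| ≤ (K / 2 * dl * ((ny + nx) + (nw + nx))) * (Ey * Ex + Ew * Ex) :=
            step1
        _ ≤ B * Ex' := by
            have hc : ((ny + nx) + (nw + nx)) * (Ey * Ex + Ew * Ex) ≤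
                2 * ((4 * C₁ + dl) * (Em * Ex')) := by linarith only [claimA, claimB]
            have := mul_le_mul_of_nonneg_left hc (by positivity : (0:ℝ) ≤ K / 2 * dl)
            calc (K / 2 * dl * ((ny + nx) + (nw + nx))) * (Ey * Ex + Ew * Ex)
                = (K / 2 * dl) * (((ny + nx) + (nw + nx)) * (Ey * Ex + Ew * Ex)) := by ring
              _ ≤ (K / 2 * dl) * (2 * ((4 * C₁ + dl) * (Em * Ex'))) := this
              _ = B * Ex' := by rw [hBdef]; ring
    -- integrate
    have hpsi_y : psiFun M y = ∫ x, f x := rfl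
    have hpsi_w : psiFun M w = ∫ x, g x := rfl
    have hbig : |psiFun M y - psiFun M w| ≤ B * I₀ := by
      rw [hpsi_y, hpsi_w]
      have hB0 : 0 ≤ B := by positivity
      calc |(∫ x : Fin k → ℝ, f x) - ∫ x : Fin k → ℝ, g x|
            = |∫ x : Fin k → ℝ, (f x - g x)| := by
            rw [integral_sub hf_int hg_int]
        _ ≤ ∫ x : Fin k → ℝ, |f x - g x| := by
            simpa [Real.norm_eq_abs] using
              norm_integral_le_integral_norm (μ := volume) (fun x : Fin k → ℝ => f x - g x)
        _ ≤ ∫ x : Fin k → ℝ, B * Real.exp (-(lam / 4) * ∑ i, x i ^ 2) := by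
            refine integral_mono (hf_int.sub hg_int).abs ?_ hpt
            exact ((gauss_integrable k h4).const_mul B)
        _ = B * I₀ := by rw [integral_const_mul, hI0def]
    refine hbig.trans ?_
    -- final arithmetic
    have a1 : K * I₀ * (4 * C₁) ≤ (K + 1) * (4 * C₁ + 1) * (I₀ + 1) := by
      nlinarith only [mul_nonneg hK0 hC10, mul_nonneg hK0 hI00, mul_nonneg hC10 hI00,
        mul_nonneg (mul_nonneg hK0 hC10) hI00, hK0, hC10, hI00]
    have a2 : K * I₀ ≤ (K + 1) * (4 * C₁ + 1) * (I₀ + 1) := by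
      nlinarith only [mul_nonneg hK0 hC10, mul_nonneg hK0 hI00, mul_nonneg hC10 hI00,
        mul_nonneg (mul_nonneg hK0 hC10) hI00, hK0, hC10, hI00]
    have b1 := mul_le_mul_of_nonneg_right a1 hdl0
    have b2 := mul_le_mul_of_nonneg_right a2 (sq_nonneg dl)
    have key : K * dl * (4 * C₁ + dl) * I₀ ≤
        ((K + 1) * (4 * C₁ + 1) * (I₀ + 1)) * (dl + D) := by
      have hDd : D = dl ^ 2 := hdl2.symm
      rw [hDd]
      linarith only [b1, b2]
    calc B * I₀ = (K * dl * (4 * C₁ + dl) * I₀) * Em := by rw [hBdef]; ring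
      _ ≤ (((K + 1) * (4 * C₁ + 1) * (I₀ + 1)) * (dl + D)) * Em :=
          mul_le_mul_of_nonneg_right key hEm0
      _ = (K + 1) * (4 * C₁ + 1) * (I₀ + 1) * Em * (dl + D) := by ring
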